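/- Let s ≥ 1 and let F be the free monoid of words over ℤ/sℤ. For a word z = i_1…i_k let z̄ = (-i_k)…(-i_1), and for nonempty words v = v'i and w = jw' (ending in the letter i and beginning with the letter j respectively) let v·w = v'(i+j)w'. On the free ℤ-module ℤA with basis {a_x : x ∈ F}, define a ℤ-bilinear product by a_x ⊗ a_y = Σ_{(v,z,w) : x = vz, y = z̄w} (a_{vw} + a_{v·w}), where the sum runs over all ways of writing x = vz and y = z̄w as concatenations, and where the term a_{v·w} is omitted whenever v or w is the empty word. Then this product is associative with unit a_∅ (the basis element of the empty word), so that (ℤA, +, ⊗) is an associative unital ring. -/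

import Mathlib

set_option maxHeartbeats 1000000


/-- The involution on words over `ℤ/sℤ`: `(i_1 … i_k)⁻ = (-i_k) … (-i_1)`. -/
def wordInv (s : ℕ) (x : List (ZMod s)) : List (ZMod s) :=
  (x.map fun a => -a).reverse

/-- The fusion term: for nonempty `v = v'i` and `w = jw'`, the basis element of
`v · w = v'(i+j)w'`; it is `0` (omitted) when `v` or `w` is empty. -/
noncomputable def fuseTerm (s : ℕ) (v w : List (ZMod s)) : List (ZMod s) →₀ ℤ :=
  match v.getLast?, w with
  | some i, j :: w' => Finsupp.single (v.dropLast ++ (i + j) :: w') 1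
  | _, _ => 0

/-- The product of two basis elements `a_x ⊗ a_y`: the sum over all decompositions
`x = vz`, `y = z̄w` of `a_{vw} + a_{v·w}` (the second term omitted when `v` or `w`
is empty). Decompositions are parametrized by the length `t` of `z`. -/
noncomputable def basisMul (s : ℕ) (x y : List (ZMod s)) : List (ZMod s) →₀ ℤ :=
  ∑ t ∈ Finset.range (min x.length y.length + 1),
    if y.take t = wordInv s (x.drop (x.length - t)) then
      Finsupp.single (x.take (x.length - t) ++ y.drop t) 1 +
        fuseTerm s (x.take (x.length - t)) (y.drop t)
    else 0

/-- The `ℤ`-bilinear extension of `basisMul` to the free `ℤ`-module on the words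
over `ℤ/sℤ`. -/
noncomputable def fusionMul (s : ℕ) (f g : List (ZMod s) →₀ ℤ) : List (ZMod s) →₀ ℤ :=
  f.sum fun x cx => g.sum fun y cy => (cx * cy) • basisMul s x y


variable {s : ℕ}
lemma fuseTerm_nil_right (v : List (ZMod s)) : fuseTerm s v [] = 0 := by
  unfold fuseTerm; cases v.getLast? <;> rfl
lemma fuseTerm_nil_left (w : List (ZMod s)) : fuseTerm s [] w = 0 := by
  unfold fuseTerm; cases w <;> rfl
lemma fuseTerm_concat_cons (v w : List (ZMod s)) (i j : ZMod s) :
    fuseTerm s (v ++ [i]) (j :: w) = Finsupp.single (v ++ (i + j) :: w) 1 := by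
  unfold fuseTerm; simp

lemma wordInv_concat (x : List (ZMod s)) (a : ZMod s) :
    wordInv s (x ++ [a]) = -a :: wordInv s x := by simp [wordInv]

lemma basisMul_nil_left (y : List (ZMod s)) : basisMul s [] y = Finsupp.single y 1 := by
  simp [basisMul, fuseTerm_nil_left, wordInv]
lemma basisMul_nil_right (x : List (ZMod s)) : basisMul s x [] = Finsupp.single x 1 := by
  simp [basisMul, fuseTerm_nil_right, wordInv, List.drop_length]

lemma basisMul_cons_right (x z : List (ZMod s)) (k : ZMod s) :
    basisMul s x (k :: z) = Finsupp.single (x ++ k :: z) 1 + fuseTerm s x (k :: z) +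
      (if x.getLast? = some (-k) then basisMul s x.dropLast z else 0) := by
  rcases List.eq_nil_or_concat x with rfl | ⟨x₀, l, rfl⟩
  · simp [basisMul_nil_left, fuseTerm_nil_left]
  simp only [List.concat_eq_append]
  rw [show (x₀ ++ [l]).getLast? = some l from by simp,
    show (x₀ ++ [l]).dropLast = x₀ from by simp]
  simp only [Option.some.injEq,
    show (l = -k) ↔ (k = -l) from ⟨fun h => by simp [h], fun h => by simp [h]⟩]
  conv_lhs => rw [basisMul]
  rw [show min (x₀ ++ [l]).length (k :: z).length + 1 = (min x₀.length z.length + 1) + 1 by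
      simp [Nat.succ_min_succ], Finset.sum_range_succ']
  have hterm : ∀ t' ∈ Finset.range (min x₀.length z.length + 1),
      (if (k :: z).take (t' + 1) =
          wordInv s ((x₀ ++ [l]).drop ((x₀ ++ [l]).length - (t' + 1))) then
        Finsupp.single ((x₀ ++ [l]).take ((x₀ ++ [l]).length - (t' + 1)) ++ (k :: z).drop (t' + 1)) 1 +
          fuseTerm s ((x₀ ++ [l]).take ((x₀ ++ [l]).length - (t' + 1))) ((k :: z).drop (t' + 1))
      else 0) =
      (if k = -l then
        (if z.take t' = wordInv s (x₀.drop (x₀.length - t')) then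
          Finsupp.single (x₀.take (x₀.length - t') ++ z.drop t') 1 +
            fuseTerm s (x₀.take (x₀.length - t')) (z.drop t')
        else 0) else 0) := by
    intro t' ht'
    have hsub : (x₀ ++ [l]).length - (t' + 1) = x₀.length - t' := by simp
    have hle : x₀.length - t' ≤ x₀.length := Nat.sub_le _ _
    rw [hsub, List.drop_append_of_le_length hle, List.take_append_of_le_length hle,
      wordInv_concat, List.take_succ_cons, List.drop_succ_cons]
    by_cases hk : k = -l
    · simp [hk]
    · simp [hk]
  rw [Finset.sum_congr rfl hterm]
  have h0 : ((k :: z).take 0 =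
      wordInv s ((x₀ ++ [l]).drop ((x₀ ++ [l]).length - 0))) := by
    simp [wordInv]
  rw [if_pos h0]
  simp only [Nat.sub_zero, List.take_length, List.drop_zero]
  by_cases hk : k = -l
  · simp only [if_pos hk]
    rw [show (∑ t' ∈ Finset.range (min x₀.length z.length + 1),
        if z.take t' = wordInv s (x₀.drop (x₀.length - t')) then
          Finsupp.single (x₀.take (x₀.length - t') ++ z.drop t') 1 +
            fuseTerm s (x₀.take (x₀.length - t')) (z.drop t')
        else 0) = basisMul s x₀ z from rfl]
    rw [List.append_assoc]
    abel
  · simp only [if_neg hk, Finset.sum_const_zero]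
    rw [List.append_assoc]
    abel

lemma basisMul_concat_left (x z : List (ZMod s)) (k : ZMod s) :
    basisMul s (x ++ [k]) z = Finsupp.single (x ++ k :: z) 1 + fuseTerm s (x ++ [k]) z +
      (if z.head? = some (-k) then basisMul s x z.tail else 0) := by
  rcases z with _ | ⟨h, z₀⟩
  · simp [basisMul_nil_right, fuseTerm_nil_right]
  rw [show (h :: z₀).head? = some h from rfl, show (h :: z₀).tail = z₀ from rfl]
  simp only [Option.some.injEq]
  conv_lhs => rw [basisMul]
  rw [show min (x ++ [k]).length (h :: z₀).length + 1 = (min x.length z₀.length + 1) + 1 by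
      simp [Nat.succ_min_succ], Finset.sum_range_succ']
  have hterm : ∀ t' ∈ Finset.range (min x.length z₀.length + 1),
      (if (h :: z₀).take (t' + 1) =
          wordInv s ((x ++ [k]).drop ((x ++ [k]).length - (t' + 1))) then
        Finsupp.single ((x ++ [k]).take ((x ++ [k]).length - (t' + 1)) ++ (h :: z₀).drop (t' + 1)) 1 +
          fuseTerm s ((x ++ [k]).take ((x ++ [k]).length - (t' + 1))) ((h :: z₀).drop (t' + 1))
      else 0) =
      (if h = -k then
        (if z₀.take t' = wordInv s (x.drop (x.length - t')) then
          Finsupp.single (x.take (x.length - t') ++ z₀.drop t') 1 +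
            fuseTerm s (x.take (x.length - t')) (z₀.drop t')
        else 0) else 0) := by
    intro t' ht'
    have hsub : (x ++ [k]).length - (t' + 1) = x.length - t' := by simp
    have hle : x.length - t' ≤ x.length := Nat.sub_le _ _
    rw [hsub, List.drop_append_of_le_length hle, List.take_append_of_le_length hle,
      wordInv_concat, List.take_succ_cons, List.drop_succ_cons]
    by_cases hk : h = -k
    · simp [hk]
    · simp [hk]
  rw [Finset.sum_congr rfl hterm]
  have h0 : ((h :: z₀).take 0 =
      wordInv s ((x ++ [k]).drop ((x ++ [k]).length - 0))) := by
    simp [wordInv]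
  rw [if_pos h0]
  simp only [Nat.sub_zero, List.take_length, List.drop_zero]
  by_cases hk : h = -k
  · simp only [if_pos hk]
    rw [show (∑ t' ∈ Finset.range (min x.length z₀.length + 1),
        if z₀.take t' = wordInv s (x.drop (x.length - t')) then
          Finsupp.single (x.take (x.length - t') ++ z₀.drop t') 1 +
            fuseTerm s (x.take (x.length - t')) (z₀.drop t')
        else 0) = basisMul s x z₀ from rfl]
    rw [List.append_assoc, List.singleton_append]
    abel
  · simp only [if_neg hk, Finset.sum_const_zero]
    rw [List.append_assoc, List.singleton_append]
    abel


lemma basisMul_single_letter (x : List (ZMod s)) (k : ZMod s) :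
    basisMul s x [k] = Finsupp.single (x ++ [k]) 1 + fuseTerm s x [k] +
      (if x.getLast? = some (-k) then Finsupp.single x.dropLast 1 else 0) := by
  rw [basisMul_cons_right, basisMul_nil_right]

lemma basisMul_letter_left (z : List (ZMod s)) (k : ZMod s) :
    basisMul s [k] z = Finsupp.single (k :: z) 1 + fuseTerm s [k] z +
      (if z.head? = some (-k) then Finsupp.single z.tail 1 else 0) := by
  have := basisMul_concat_left ([] : List (ZMod s)) z k
  simpa [basisMul_nil_left] using this

lemma fusionMul_single_single (x y : List (ZMod s)) (c d : ℤ) :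
    fusionMul s (Finsupp.single x c) (Finsupp.single y d) = (c * d) • basisMul s x y := by
  unfold fusionMul
  rw [Finsupp.sum_single_index (by simp), Finsupp.sum_single_index (by simp)]

lemma fusionMul_zero_left (g : List (ZMod s) →₀ ℤ) : fusionMul s 0 g = 0 :=
  Finsupp.sum_zero_index

lemma fusionMul_zero_right (f : List (ZMod s) →₀ ℤ) : fusionMul s f 0 = 0 := by
  unfold fusionMul; simp

lemma fusionMul_add_left (f₁ f₂ g : List (ZMod s) →₀ ℤ) :
    fusionMul s (f₁ + f₂) g = fusionMul s f₁ g + fusionMul s f₂ g :=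
  Finsupp.sum_add_index' (fun a => by simp)
    (fun a b₁ b₂ => by simp [add_mul, add_smul, Finsupp.sum_add])

lemma fusionMul_add_right (f g₁ g₂ : List (ZMod s) →₀ ℤ) :
    fusionMul s f (g₁ + g₂) = fusionMul s f g₁ + fusionMul s f g₂ := by
  unfold fusionMul
  rw [← Finsupp.sum_add]
  apply Finsupp.sum_congr
  intro x _
  exact Finsupp.sum_add_index' (fun a => by simp) (fun a b₁ b₂ => by simp [mul_add, add_smul])

lemma fusionMul_smul_left (c : ℤ) (f g : List (ZMod s) →₀ ℤ) :
    fusionMul s (c • f) g = c • fusionMul s f g := by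
  unfold fusionMul
  rw [Finsupp.sum_smul_index (fun i => by simp)]
  simp [Finsupp.smul_sum, smul_smul, mul_assoc]

lemma fusionMul_smul_right (c : ℤ) (f g : List (ZMod s) →₀ ℤ) :
    fusionMul s f (c • g) = c • fusionMul s f g := by
  unfold fusionMul
  rw [Finsupp.smul_sum]
  apply Finsupp.sum_congr
  intro x _
  rw [Finsupp.sum_smul_index (fun i => by simp), Finsupp.smul_sum]
  apply Finsupp.sum_congr
  intro y _
  rw [smul_smul, mul_left_comm]

lemma fusionMul_one_left (f : List (ZMod s) →₀ ℤ) :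
    fusionMul s (Finsupp.single [] 1) f = f := by
  unfold fusionMul
  rw [Finsupp.sum_single_index (by simp)]
  have : ∀ (y : List (ZMod s)) (cy : ℤ),
      ((1 : ℤ) * cy) • basisMul s [] y = Finsupp.single y cy := by
    intro y cy; rw [basisMul_nil_left]; simp
  simp only [this]
  exact Finsupp.sum_single f

lemma fusionMul_one_right (f : List (ZMod s) →₀ ℤ) :
    fusionMul s f (Finsupp.single [] 1) = f := by
  unfold fusionMul
  have : ∀ (x : List (ZMod s)) (cx : ℤ),
      ((Finsupp.single ([] : List (ZMod s)) (1 : ℤ)).sum fun y cy =>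
        (cx * cy) • basisMul s x y) = Finsupp.single x cx := by
    intro x cx
    rw [Finsupp.sum_single_index (by simp), basisMul_nil_right]
    simp
  simp only [this]
  exact Finsupp.sum_single f

lemma fusionMul_core (x z : List (ZMod s)) (k : ZMod s) :
    fusionMul s (basisMul s x [k]) (Finsupp.single z 1) =
      fusionMul s (Finsupp.single x 1) (basisMul s [k] z) := by
  rcases z with _ | ⟨h, z₀⟩
  · rw [fusionMul_one_right, basisMul_nil_right, fusionMul_single_single]
    simp
  rcases List.eq_nil_or_concat x with rfl | ⟨x₀, l, rfl⟩
  · rw [basisMul_nil_left, fusionMul_one_left, fusionMul_single_single]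
    simp
  simp only [List.concat_eq_append]
  -- expand LHS
  rw [basisMul_single_letter,
    show fuseTerm s (x₀ ++ [l]) [k] = Finsupp.single (x₀ ++ [l + k]) 1 from
      fuseTerm_concat_cons x₀ [] l k,
    show (x₀ ++ [l]).getLast? = some l from by simp,
    show (x₀ ++ [l]).dropLast = x₀ from by simp,
    fusionMul_add_left, fusionMul_add_left,
    apply_ite (fun t => fusionMul s t (Finsupp.single (h :: z₀) 1)),
    fusionMul_zero_left, fusionMul_single_single, fusionMul_single_single,
    fusionMul_single_single]
  -- expand RHS
  rw [basisMul_letter_left,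
    show fuseTerm s [k] (h :: z₀) = Finsupp.single ((k + h) :: z₀) 1 from by
      simpa using fuseTerm_concat_cons [] z₀ k h,
    show (h :: z₀).head? = some h from rfl,
    show (h :: z₀).tail = z₀ from rfl,
    fusionMul_add_right, fusionMul_add_right,
    apply_ite (fun t => fusionMul s (Finsupp.single (x₀ ++ [l]) 1) t),
    fusionMul_zero_right, fusionMul_single_single, fusionMul_single_single,
    fusionMul_single_single]
  simp only [one_mul, one_smul]
  -- expand remaining basisMuls
  rw [basisMul_concat_left (x₀ ++ [l]) (h :: z₀) k,
    show fuseTerm s (x₀ ++ [l] ++ [k]) (h :: z₀) =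
      Finsupp.single ((x₀ ++ [l]) ++ (k + h) :: z₀) 1 from
      fuseTerm_concat_cons (x₀ ++ [l]) z₀ k h,
    basisMul_concat_left x₀ (h :: z₀) (l + k),
    show fuseTerm s (x₀ ++ [l + k]) (h :: z₀) =
      Finsupp.single (x₀ ++ (l + k + h) :: z₀) 1 from
      fuseTerm_concat_cons x₀ z₀ (l + k) h,
    basisMul_cons_right (x₀ ++ [l]) (h :: z₀) k,
    show fuseTerm s (x₀ ++ [l]) (k :: h :: z₀) =
      Finsupp.single (x₀ ++ (l + k) :: h :: z₀) 1 from
      fuseTerm_concat_cons x₀ (h :: z₀) l k,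
    basisMul_cons_right (x₀ ++ [l]) z₀ (k + h),
    show fuseTerm s (x₀ ++ [l]) ((k + h) :: z₀) =
      Finsupp.single (x₀ ++ (l + (k + h)) :: z₀) 1 from
      fuseTerm_concat_cons x₀ z₀ l (k + h)]
  simp only [show (h :: z₀).head? = some h from rfl, show (h :: z₀).tail = z₀ from rfl,
    show (x₀ ++ [l]).getLast? = some l from by simp,
    show (x₀ ++ [l]).dropLast = x₀ from by simp,
    Option.some.injEq,
    show (h = -(l + k)) ↔ (l = -(k + h)) from
      ⟨fun e => by rw [e]; ring, fun e => by rw [e]; ring⟩,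
    show (l + k + h) = (l + (k + h)) from by ring]
  abel

def Assoc3 (s : ℕ) (g : List (ZMod s) →₀ ℤ) : Prop :=
  ∀ f h, fusionMul s (fusionMul s f g) h = fusionMul s f (fusionMul s g h)

lemma assoc3_zero : Assoc3 s 0 := by
  intro f h
  simp [fusionMul_zero_left, fusionMul_zero_right]

lemma assoc3_add {g₁ g₂ : List (ZMod s) →₀ ℤ} (h1 : Assoc3 s g₁) (h2 : Assoc3 s g₂) :
    Assoc3 s (g₁ + g₂) := by
  intro f h
  rw [fusionMul_add_right, fusionMul_add_left, fusionMul_add_left, fusionMul_add_right,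
    h1 f h, h2 f h]

lemma assoc3_smul (c : ℤ) {g : List (ZMod s) →₀ ℤ} (hg : Assoc3 s g) :
    Assoc3 s (c • g) := by
  intro f h
  rw [fusionMul_smul_right, fusionMul_smul_left, fusionMul_smul_left, fusionMul_smul_right,
    hg f h]

lemma assoc3_sub {g₁ g₂ : List (ZMod s) →₀ ℤ} (h1 : Assoc3 s g₁) (h2 : Assoc3 s g₂) :
    Assoc3 s (g₁ - g₂) := by
  have := assoc3_add h1 (assoc3_smul (-1) h2)
  simpa [sub_eq_add_neg] using this

lemma assoc3_one : Assoc3 s (Finsupp.single [] 1) := by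
  intro f h
  rw [fusionMul_one_right, fusionMul_one_left]

lemma assoc3_mul {g₁ g₂ : List (ZMod s) →₀ ℤ} (h1 : Assoc3 s g₁) (h2 : Assoc3 s g₂) :
    Assoc3 s (fusionMul s g₁ g₂) := by
  intro f h
  calc fusionMul s (fusionMul s f (fusionMul s g₁ g₂)) h
      = fusionMul s (fusionMul s (fusionMul s f g₁) g₂) h := by rw [h1 f g₂]
    _ = fusionMul s (fusionMul s f g₁) (fusionMul s g₂ h) := h2 _ h
    _ = fusionMul s f (fusionMul s g₁ (fusionMul s g₂ h)) := h1 f _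
    _ = fusionMul s f (fusionMul s (fusionMul s g₁ g₂) h) := by rw [h2 g₁ h]

lemma assoc_mid_letter (k : ZMod s) : Assoc3 s (Finsupp.single [k] 1) := by
  intro f h
  induction f using Finsupp.induction_linear with
  | zero => simp [fusionMul_zero_left]
  | add f₁ f₂ ih₁ ih₂ =>
      rw [fusionMul_add_left, fusionMul_add_left, fusionMul_add_left, ih₁, ih₂]
  | single x c =>
    induction h using Finsupp.induction_linear with
    | zero => simp [fusionMul_zero_right]
    | add h₁ h₂ ih₁ ih₂ =>
        rw [fusionMul_add_right, fusionMul_add_right, fusionMul_add_right, ih₁, ih₂]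
    | single z d =>
        rw [show Finsupp.single x c = c • Finsupp.single x (1 : ℤ) from by simp,
          show Finsupp.single z d = d • Finsupp.single z (1 : ℤ) from by simp]
        simp only [fusionMul_smul_left, fusionMul_smul_right]
        congr 2
        rw [fusionMul_single_single, fusionMul_single_single]
        simp only [one_mul, one_smul]
        exact fusionMul_core x z k

lemma assoc3_single (y : List (ZMod s)) : Assoc3 s (Finsupp.single y 1) := by
  suffices H : ∀ n (y : List (ZMod s)), y.length ≤ n → Assoc3 s (Finsupp.single y 1) from
    H y.length y le_rfl
  intro n
  induction n with
  | zero =>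
      intro y hy
      rw [List.length_eq_zero_iff.mp (Nat.le_zero.mp hy)]
      exact assoc3_one
  | succ n ih =>
      intro y hy
      rcases List.eq_nil_or_concat y with rfl | ⟨y₀, k, rfl⟩
      · exact assoc3_one
      simp only [List.concat_eq_append] at hy ⊢
      have hy₀ : y₀.length ≤ n := by simp at hy; omega
      have key : Finsupp.single (y₀ ++ [k]) (1 : ℤ)
          = fusionMul s (Finsupp.single y₀ 1) (Finsupp.single [k] 1)
            - fuseTerm s y₀ [k]
            - (if y₀.getLast? = some (-k) then Finsupp.single y₀.dropLast 1 else 0) := by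
        rw [fusionMul_single_single]
        simp only [one_mul, one_smul]
        rw [basisMul_single_letter]
        abel
      rw [key]
      apply assoc3_sub
      apply assoc3_sub
      · exact assoc3_mul (ih y₀ hy₀) (assoc_mid_letter k)
      · rcases List.eq_nil_or_concat y₀ with rfl | ⟨w, m, rfl⟩
        · rw [fuseTerm_nil_left]; exact assoc3_zero
        · simp only [List.concat_eq_append] at hy₀ ⊢
          rw [fuseTerm_concat_cons w [] m k]
          apply ih
          simp at hy₀ ⊢; omega
      · split_ifs
        · apply ih
          have := @List.length_dropLast _ y₀
          omega
        · exact assoc3_zero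

lemma assoc3_all (g : List (ZMod s) →₀ ℤ) : Assoc3 s g := by
  induction g using Finsupp.induction_linear with
  | zero => exact assoc3_zero
  | add f g ihf ihg => exact assoc3_add ihf ihg
  | single y b =>
      have := assoc3_smul b (assoc3_single y)
      simpa [Finsupp.smul_single] using this

/-- the fusion product on the free `ℤ`-module with basis the words
over `ℤ/sℤ` is associative, with unit the basis element of the empty word; thus
`(ℤA, +, ⊗)` is an associative unital ring. -/
theorem fusionMul_associative_unital (s : ℕ) (hs : 1 ≤ s) :
    (∀ f g h : List (ZMod s) →₀ ℤ,
      fusionMul s (fusionMul s f g) h = fusionMul s f (fusionMul s g h)) ∧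
    (∀ f : List (ZMod s) →₀ ℤ, fusionMul s (Finsupp.single [] 1) f = f) ∧
    (∀ f : List (ZMod s) →₀ ℤ, fusionMul s f (Finsupp.single [] 1) = f) := by
  exact ⟨fun f g h => assoc3_all g f h, fusionMul_one_left, fusionMul_one_right⟩
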